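/- Let A ∈ 𝒜_{d,m} and φ_{i,j} be univariate CDFs. For any coordinate k, the limit of F_{A,Φ}(x) as x_k → ∞ equals the MDMA in the remaining d-1 variables whose tensor is obtained from A by summing over the k-th index; in particular marginalization of an MDMA over any subset of variables again yields an MDMA with tensor in 𝒜_{d',m} for d' the number of remaining variables. -/
import Mathlib


open Filter Finset

/-- Marginalizing an MDMA over any coordinate yields an MDMA in the remaining variables
whose tensor is obtained by summing over the corresponding index of `A`; moreover that
tensor again has nonnegative entries summing to 1 (i.e. lies in `𝒜_{d,m}`). -/
theorem stmt_4 (d m : ℕ) (A : (Fin (d + 1) → Fin m) → ℝ)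
    (hA0 : ∀ idx, 0 ≤ A idx) (hA1 : ∑ idx, A idx = 1)
    (φ : Fin m → Fin (d + 1) → ℝ → ℝ)
    (hmono : ∀ i j, Monotone (φ i j))
    (hbot : ∀ i j, Tendsto (φ i j) atBot (nhds 0))
    (htop : ∀ i j, Tendsto (φ i j) atTop (nhds 1))
    (F : (Fin (d + 1) → ℝ) → ℝ)
    (hF : ∀ x, F x = ∑ idx, A idx * ∏ j, φ (idx j) j (x j))
    (k : Fin (d + 1))
    (A' : (Fin d → Fin m) → ℝ)
    (hA' : ∀ idx, A' idx = ∑ i : Fin m, A (k.insertNth i idx)) :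
    (∀ idx, 0 ≤ A' idx) ∧ (∑ idx, A' idx = 1) ∧
    ∀ x : Fin d → ℝ,
      Tendsto (fun t => F (k.insertNth t x)) atTop
        (nhds (∑ idx, A' idx * ∏ j, φ (idx j) (k.succAbove j) (x j))) := by
  have hsum : ∀ (g : (Fin (d + 1) → Fin m) → ℝ),
      ∑ idx, g idx = ∑ p : Fin d → Fin m, ∑ i : Fin m, g (k.insertNth i p) := by
    intro g
    rw [← (Fin.insertNthEquiv (fun _ => Fin m) k).sum_comp g, Fintype.sum_prod_type_right]
    rfl
  refine ⟨fun idx => (hA' idx) ▸ Finset.sum_nonneg fun i _ => hA0 _, ?_, ?_⟩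
  · rw [← hA1, hsum A]
    exact Finset.sum_congr rfl fun p _ => hA' p
  · intro x
    have key : ∀ t, F (k.insertNth t x) =
        ∑ idx : Fin (d + 1) → Fin m,
          (A idx * ∏ j : Fin d, φ (idx (k.succAbove j)) (k.succAbove j) (x j))
            * φ (idx k) k t := by
      intro t
      rw [hF]
      refine Finset.sum_congr rfl fun idx _ => ?_
      rw [Fin.prod_univ_succAbove (fun j => φ (idx j) j (Fin.insertNth (α := fun _ => ℝ) k t x j)) k]
      simp [Fin.insertNth_apply_same, Fin.insertNth_apply_succAbove, mul_comm, mul_assoc,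
        mul_left_comm]
    have hlim : Tendsto (fun t => F (k.insertNth t x)) atTop
        (nhds (∑ idx : Fin (d + 1) → Fin m,
          (A idx * ∏ j : Fin d, φ (idx (k.succAbove j)) (k.succAbove j) (x j)) * 1)) := by
      simp only [key]
      exact tendsto_finset_sum _ fun idx _ => Tendsto.const_mul _ (htop _ _)
    convert hlim using 2
    simp only [mul_one]
    rw [hsum (fun idx => A idx * ∏ j : Fin d, φ (idx (k.succAbove j)) (k.succAbove j) (x j))]
    refine Finset.sum_congr rfl fun p _ => ?_
    rw [hA', Finset.sum_mul]
    refine Finset.sum_congr rfl fun i _ => ?_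
    congr 1
    exact Finset.prod_congr rfl fun j _ => by rw [Fin.insertNth_apply_succAbove]
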